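/- For n ≥ 6, every edge-coloured graph on n vertices with all colour classes of size at most 2 and no rainbow triangle has at most ⌊n/2⌋⌈n/2⌉ + ⌊⌈n/2⌉/2⌋ edges. -/

import Mathlib

open Finset

set_option linter.unusedSectionVars false
set_option linter.unusedVariables false
set_option maxHeartbeats 1000000

namespace Stmt7Aux

variable {V : Type*} [Fintype V] [DecidableEq V] (G : SimpleGraph V) [DecidableRel G.Adj]
  (col : Sym2 V → ℕ)

/-- cherry witnesses for the (ordered) edge `uv`: common neighbours `w` with
`col (uw) = col (vw)`. -/
def Wit (u v : V) : Finset V :=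
  (G.neighborFinset u ∩ G.neighborFinset v).filter (fun w => col s(u, w) = col s(v, w))

/-- codegree -/
def codeg (u v : V) : ℕ := (G.neighborFinset u ∩ G.neighborFinset v).card

/-- colours whose class has (at least) two edges -/
def C2 : Finset ℕ :=
  (G.edgeFinset.image col).filter (fun c => 2 ≤ (G.edgeFinset.filter (fun e => col e = c)).card)

variable {G} {col}

lemma no_three (hclass : ∀ i : ℕ, (G.edgeFinset.filter (fun e => col e = i)).card ≤ 2)
    {e1 e2 e3 : Sym2 V}
    (h1 : e1 ∈ G.edgeFinset) (h2 : e2 ∈ G.edgeFinset) (h3 : e3 ∈ G.edgeFinset)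
    (hc2 : col e2 = col e1) (hc3 : col e3 = col e1)
    (d12 : e1 ≠ e2) (d13 : e1 ≠ e3) (d23 : e2 ≠ e3) : False := by
  have hs : ({e1, e2, e3} : Finset (Sym2 V)) ⊆ G.edgeFinset.filter (fun e => col e = col e1) := by
    intro e he
    simp only [mem_insert, mem_singleton] at he
    rcases he with rfl | rfl | rfl <;> simp [Finset.mem_filter, h1, h2, h3, hc2, hc3]
  have hcard : ({e1, e2, e3} : Finset (Sym2 V)).card = 3 := by
    rw [card_insert_of_notMem (by simp [d12, d13]), card_insert_of_notMem (by simp [d23]),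
      card_singleton]
  have hle := card_le_card hs
  rw [hcard] at hle
  have := hclass (col e1)
  omega

lemma notRainbow
    (hrb : ¬ ∃ x y z : V, G.Adj x y ∧ G.Adj y z ∧ G.Adj x z ∧
      col s(x, y) ≠ col s(y, z) ∧ col s(y, z) ≠ col s(x, z) ∧ col s(x, y) ≠ col s(x, z))
    {x y z : V} (hxy : G.Adj x y) (hyz : G.Adj y z) (hxz : G.Adj x z) :
    col s(x, y) = col s(y, z) ∨ col s(y, z) = col s(x, z) ∨ col s(x, y) = col s(x, z) := by
  by_contra h
  push_neg at h
  exact hrb ⟨x, y, z, hxy, hyz, hxz, h.1, h.2.1, h.2.2⟩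

lemma mem_wit {u v w : V} (hw : w ∈ Wit G col u v) :
    G.Adj u w ∧ G.Adj v w ∧ col s(u, w) = col s(v, w) := by
  simp only [Wit, mem_filter, mem_inter, SimpleGraph.mem_neighborFinset] at hw
  exact ⟨hw.1.1, hw.1.2, hw.2⟩

/-- a non-cherry common neighbour gives a second edge of colour `col (uv)` -/
lemma nonCherry
    (hrb : ¬ ∃ x y z : V, G.Adj x y ∧ G.Adj y z ∧ G.Adj x z ∧
      col s(x, y) ≠ col s(y, z) ∧ col s(y, z) ≠ col s(x, z) ∧ col s(x, y) ≠ col s(x, z))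
    {u v w : V} (huv : G.Adj u v) (huw : G.Adj u w) (hvw : G.Adj v w)
    (hne : col s(u, w) ≠ col s(v, w)) :
    ∃ f, f ∈ G.edgeFinset ∧ col f = col s(u, v) ∧ f ≠ s(u, v) ∧
      (f = s(u, w) ∨ f = s(v, w)) := by
  have h := notRainbow hrb huw hvw.symm huv
  rw [show s(w, v) = s(v, w) from Sym2.eq_swap] at h
  have hwu : w ≠ u := huw.ne'
  have hwv : w ≠ v := hvw.ne'
  have huv' : u ≠ v := huv.ne
  rcases h with h | h | h
  · exact absurd h hne
  · refine ⟨s(v, w), ?_, h, ?_, Or.inr rfl⟩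
    · exact SimpleGraph.mem_edgeFinset.mpr hvw
    · rw [ne_eq, Sym2.eq_iff]
      rintro (⟨h1, h2⟩ | ⟨h1, h2⟩)
      · exact hwv h2
      · exact hwu h2
  · refine ⟨s(u, w), ?_, h, ?_, Or.inl rfl⟩
    · exact SimpleGraph.mem_edgeFinset.mpr huw
    · rw [ne_eq, Sym2.eq_iff]
      rintro (⟨h1, h2⟩ | ⟨h1, h2⟩)
      · exact hwv h2
      · exact huv' h1

lemma codeg_le_wit (hclass : ∀ i : ℕ, (G.edgeFinset.filter (fun e => col e = i)).card ≤ 2)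
    (hrb : ¬ ∃ x y z : V, G.Adj x y ∧ G.Adj y z ∧ G.Adj x z ∧
      col s(x, y) ≠ col s(y, z) ∧ col s(y, z) ≠ col s(x, z) ∧ col s(x, y) ≠ col s(x, z))
    {u v : V} (huv : G.Adj u v) :
    codeg G u v ≤ (Wit G col u v).card + 1 := by
  classical
  have hsplit :
      ((G.neighborFinset u ∩ G.neighborFinset v).filter
          (fun w => col s(u, w) = col s(v, w))).card
        + ((G.neighborFinset u ∩ G.neighborFinset v).filter
          (fun w => ¬ col s(u, w) = col s(v, w))).card
        = (G.neighborFinset u ∩ G.neighborFinset v).card :=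
    card_filter_add_card_filter_not _
  have hbad : ((G.neighborFinset u ∩ G.neighborFinset v).filter
      (fun w => ¬ col s(u, w) = col s(v, w))).card ≤ 1 := by
    rw [card_le_one]
    intro w1 hw1 w2 hw2
    by_contra hne12
    simp only [mem_filter, mem_inter, SimpleGraph.mem_neighborFinset] at hw1 hw2
    obtain ⟨⟨huw1, hvw1⟩, hc1⟩ := hw1
    obtain ⟨⟨huw2, hvw2⟩, hc2⟩ := hw2
    obtain ⟨f1, hf1E, hf1c, hf1ne, hf1or⟩ := nonCherry hrb huv huw1 hvw1 hc1
    obtain ⟨f2, hf2E, hf2c, hf2ne, hf2or⟩ := nonCherry hrb huv huw2 hvw2 hc2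
    have hw1u : w1 ≠ u := huw1.ne'
    have hw1v : w1 ≠ v := hvw1.ne'
    have hw2u : w2 ≠ u := huw2.ne'
    have hw2v : w2 ≠ v := hvw2.ne'
    have huv' : u ≠ v := huv.ne
    have hf12 : f1 ≠ f2 := by
      rcases hf1or with rfl | rfl <;> rcases hf2or with rfl | rfl <;>
        · intro heq
          rcases Sym2.eq_iff.mp heq with ⟨h1, h2⟩ | ⟨h1, h2⟩ <;> simp_all
    exact no_three hclass (SimpleGraph.mem_edgeFinset.mpr huv) hf1E hf2E hf1c hf2c
      hf1ne.symm hf2ne.symm hf12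
  unfold codeg Wit
  omega

lemma sum_wit_le (hclass : ∀ i : ℕ, (G.edgeFinset.filter (fun e => col e = i)).card ≤ 2)
    (u : V) :
    ∑ v ∈ G.neighborFinset u, (Wit G col u v).card ≤ G.degree u := by
  classical
  have hdisj : ∀ v1 ∈ G.neighborFinset u, ∀ v2 ∈ G.neighborFinset u, v1 ≠ v2 →
      Disjoint (Wit G col u v1) (Wit G col u v2) := by
    intro v1 h1 v2 h2 hne
    rw [Finset.disjoint_left]
    intro w hw1 hw2
    obtain ⟨huw, hv1w, hcol1⟩ := mem_wit hw1
    obtain ⟨_, hv2w, hcol2⟩ := mem_wit hw2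
    have hv1u : v1 ≠ u := ((SimpleGraph.mem_neighborFinset _ _ _).mp h1).ne'
    have hv2u : v2 ≠ u := ((SimpleGraph.mem_neighborFinset _ _ _).mp h2).ne'
    have hwu : w ≠ u := huw.ne'
    have hwv1 : w ≠ v1 := hv1w.ne'
    have hwv2 : w ≠ v2 := hv2w.ne'
    refine no_three hclass (SimpleGraph.mem_edgeFinset.mpr huw)
      (SimpleGraph.mem_edgeFinset.mpr hv1w) (SimpleGraph.mem_edgeFinset.mpr hv2w)
      hcol1.symm hcol2.symm ?_ ?_ ?_ <;>
      · rw [ne_eq, Sym2.eq_iff]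
        rintro (⟨h1', h2'⟩ | ⟨h1', h2'⟩) <;> simp_all
  have hsub : (G.neighborFinset u).biUnion (fun v => Wit G col u v) ⊆ G.neighborFinset u := by
    intro w hw
    rcases mem_biUnion.mp hw with ⟨v, _, hwv⟩
    exact (SimpleGraph.mem_neighborFinset _ _ _).mpr (mem_wit hwv).1
  calc ∑ v ∈ G.neighborFinset u, (Wit G col u v).card
      = ((G.neighborFinset u).biUnion (fun v => Wit G col u v)).card :=
        (card_biUnion hdisj).symm
    _ ≤ (G.neighborFinset u).card := card_le_card hsub
    _ = G.degree u := G.card_neighborFinset_eq_degree u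

lemma deg_add_deg_le (u v : V) :
    G.degree u + G.degree v ≤ codeg G u v + Fintype.card V := by
  have h := Finset.card_union_add_card_inter (G.neighborFinset u) (G.neighborFinset v)
  have h2 : (G.neighborFinset u ∪ G.neighborFinset v).card ≤ Fintype.card V := by
    rw [← Finset.card_univ]; exact card_le_card (subset_univ _)
  rw [← G.card_neighborFinset_eq_degree u, ← G.card_neighborFinset_eq_degree v]
  unfold codeg
  omega


-- helper: sums forcing equality
lemma all_eq_of_sum_le {α : Type*} [DecidableEq α] {s : Finset α} {f : α → ℕ} {c : ℕ}
    (h1 : ∀ i ∈ s, c ≤ f i) (h2 : ∑ i ∈ s, f i ≤ c * s.card) : ∀ i ∈ s, f i = c := by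
  intro i hi
  by_contra hne
  have hlt : ∑ j ∈ s, (fun _ => c) j < ∑ j ∈ s, f j :=
    Finset.sum_lt_sum h1 ⟨i, hi, lt_of_le_of_ne (h1 i hi) (Ne.symm hne)⟩
  rw [Finset.sum_const, smul_eq_mul, mul_comm] at hlt
  exact absurd h2 (not_le.mpr hlt)

lemma all_eq_of_le_sum {α : Type*} [DecidableEq α] {s : Finset α} {f : α → ℕ} {M : ℕ}
    (h1 : ∀ i ∈ s, f i ≤ M) (h2 : M * s.card ≤ ∑ i ∈ s, f i) : ∀ i ∈ s, f i = M := by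
  intro i hi
  by_contra hne
  have hlt : ∑ j ∈ s, f j < ∑ j ∈ s, (fun _ => M) j :=
    Finset.sum_lt_sum h1 ⟨i, hi, lt_of_le_of_ne (h1 i hi) hne⟩
  rw [Finset.sum_const, smul_eq_mul, mul_comm] at hlt
  exact absurd h2 (not_le.mpr hlt)

-- neighbour sums swap
lemma sum_nbr_eq (G : SimpleGraph V) [DecidableRel G.Adj] (f : V → ℕ) :
    ∑ u : V, ∑ v ∈ G.neighborFinset u, f v = ∑ v : V, G.degree v * f v := by
  have h1 : ∀ u : V, ∑ v ∈ G.neighborFinset u, f v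
      = ∑ v : V, if G.Adj u v then f v else 0 := by
    intro u
    rw [SimpleGraph.neighborFinset_eq_filter, sum_filter]
  simp only [h1]
  rw [Finset.sum_comm]
  refine sum_congr rfl fun v _ => ?_
  have h2 : ∀ u : V, (if G.Adj u v then f v else 0) = (if u ∈ G.neighborFinset v then f v else 0) := by
    intro u
    simp [SimpleGraph.mem_neighborFinset, G.adj_comm]
  simp only [h2]
  rw [Finset.sum_ite_mem, univ_inter, sum_const, smul_eq_mul,
    G.card_neighborFinset_eq_degree]

lemma sym2_mem_edgeFinset {u v : V} (h : G.Adj u v) : s(u, v) ∈ G.edgeFinset :=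
  SimpleGraph.mem_edgeFinset.mpr h

/-- The edge pair `{uw, vw}` of a cherry determines `(u,v,w)` up to swapping `u,v`. -/
lemma pair_analysis {u v w a b c : V}
    (huv : u ≠ v) (hwu : w ≠ u) (hwv : w ≠ v)
    (hab : a ≠ b) (hca : c ≠ a) (hcb : c ≠ b)
    (hpair : ({s(u, w), s(v, w)} : Finset (Sym2 V)) = {s(a, c), s(b, c)}) :
    (u = a ∧ v = b ∧ w = c) ∨ (u = b ∧ v = a ∧ w = c) := by
  have h1 : s(u, w) ∈ ({s(a, c), s(b, c)} : Finset (Sym2 V)) := by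
    rw [← hpair]; exact mem_insert_self _ _
  have h2 : s(v, w) ∈ ({s(a, c), s(b, c)} : Finset (Sym2 V)) := by
    rw [← hpair]; exact mem_insert_of_mem (mem_singleton_self _)
  simp only [mem_insert, mem_singleton, Sym2.eq_iff] at h1 h2
  rcases h1 with (⟨ha1, ha2⟩ | ⟨ha1, ha2⟩) | (⟨ha1, ha2⟩ | ⟨ha1, ha2⟩) <;>
    rcases h2 with (⟨hb1, hb2⟩ | ⟨hb1, hb2⟩) | (⟨hb1, hb2⟩ | ⟨hb1, hb2⟩) <;>
    first
      | exact Or.inl ⟨ha1, hb1, ha2⟩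
      | exact Or.inr ⟨ha1, hb1, ha2⟩
      | exact absurd (ha1.trans hb1.symm) huv
      | exact absurd (ha2.trans hb1.symm) hwv
      | exact absurd (hb2.trans ha1.symm) hwu

lemma sym2_ne_of {x y z : V} (hxy : x ≠ y) (hzx : z ≠ x) (hzy : z ≠ y) :
    s(x, z) ≠ s(y, z) := by
  rw [ne_eq, Sym2.eq_iff]
  rintro (⟨h1, _⟩ | ⟨h1, h2⟩)
  · exact hxy h1
  · exact hzx h1.symm


/-- global cherry count: `Σ_u Σ_{v∈N(u)} |W(u,v)| ≤ 2 |C2|`. -/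
lemma sum_sum_wit_le
    (hclass : ∀ i : ℕ, (G.edgeFinset.filter (fun e => col e = i)).card ≤ 2) :
    ∑ u : V, ∑ v ∈ G.neighborFinset u, (Wit G col u v).card ≤ 2 * (C2 G col).card := by
  classical
  set T : Finset (V × V × V) :=
    (univ ×ˢ univ ×ˢ univ).filter
      (fun p => p.2.1 ∈ G.neighborFinset p.1 ∧ p.2.2 ∈ Wit G col p.1 p.2.1) with hT
  have hmemT : ∀ p : V × V × V, p ∈ T ↔
      (p.2.1 ∈ G.neighborFinset p.1 ∧ p.2.2 ∈ Wit G col p.1 p.2.1) := by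
    intro p
    simp [hT]
  have hcardT : T.card = ∑ u : V, ∑ v ∈ G.neighborFinset u, (Wit G col u v).card := by
    rw [hT, card_filter, sum_product]
    refine sum_congr rfl fun u _ => ?_
    rw [sum_product]
    have hinner : ∀ v : V,
        (∑ w : V, if v ∈ G.neighborFinset u ∧ w ∈ Wit G col u v then 1 else 0)
          = if v ∈ G.neighborFinset u then (Wit G col u v).card else 0 := by
      intro v
      by_cases hv : v ∈ G.neighborFinset u
      · simp only [hv, true_and, if_true]
        rw [sum_boole]
        norm_cast
        rw [filter_mem_eq_inter, univ_inter]
      · simp [hv]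
    simp only [hinner]
    rw [← sum_filter, filter_mem_eq_inter, univ_inter]
  rw [← hcardT]
  have hfib : ∀ b ∈ T.image (fun p => col s(p.1, p.2.2)),
      (T.filter (fun p => col s(p.1, p.2.2) = b)).card ≤ 2 := by
    intro b hb
    obtain ⟨p0, hp0T, hp0b⟩ := mem_image.mp hb
    obtain ⟨a, b', c⟩ := p0
    have h0 := (hmemT _).mp hp0T
    obtain ⟨hb'Na, hcWit⟩ := h0
    obtain ⟨hac, hb'c, hcol0⟩ := mem_wit hcWit
    have hab' : a ≠ b' := ((SimpleGraph.mem_neighborFinset _ _ _).mp hb'Na).ne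
    have hca : c ≠ a := hac.ne'
    have hcb : c ≠ b' := hb'c.ne'
    -- the colour class of b
    set F : Finset (Sym2 V) := G.edgeFinset.filter (fun e => col e = b) with hF
    have hFcard : F.card ≤ 2 := hclass b
    have hclassEq : ∀ p : V × V × V, p ∈ T → col s(p.1, p.2.2) = b →
        ({s(p.1, p.2.2), s(p.2.1, p.2.2)} : Finset (Sym2 V)) = F := by
      rintro ⟨u, v, w⟩ hpT hpb
      obtain ⟨hvNu, hwWit⟩ := (hmemT _).mp hpT
      obtain ⟨huw, hvw, hcolw⟩ := mem_wit hwWit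
      have huv : u ≠ v := ((SimpleGraph.mem_neighborFinset _ _ _).mp hvNu).ne
      have hwu : w ≠ u := huw.ne'
      have hwv : w ≠ v := hvw.ne'
      have hne : s(u, w) ≠ s(v, w) := by
        rw [ne_eq, Sym2.eq_iff]
        rintro (⟨h1, _⟩ | ⟨h1, h2⟩)
        · exact huv h1
        · exact hwu h1.symm
      have hsub : ({s(u, w), s(v, w)} : Finset (Sym2 V)) ⊆ F := by
        intro e he
        simp only [mem_insert, mem_singleton] at he
        rcases he with rfl | rfl
        · exact mem_filter.mpr ⟨SimpleGraph.mem_edgeFinset.mpr huw, hpb⟩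
        · exact mem_filter.mpr ⟨SimpleGraph.mem_edgeFinset.mpr hvw, by rw [← hcolw]; exact hpb⟩
      have hc2 : ({s(u, w), s(v, w)} : Finset (Sym2 V)).card = 2 := card_pair hne
      exact (eq_of_subset_of_card_le hsub (by omega)).symm ▸
        (eq_of_subset_of_card_le hsub (by omega)).symm
    have hsubset : T.filter (fun p => col s(p.1, p.2.2) = b) ⊆
        ({(a, b', c), (b', a, c)} : Finset (V × V × V)) := by
      rintro ⟨u, v, w⟩ hp
      obtain ⟨hpT, hpb⟩ := mem_filter.mp hp
      obtain ⟨hvNu, hwWit⟩ := (hmemT _).mp hpT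
      obtain ⟨huw, hvw, hcolw⟩ := mem_wit hwWit
      have huv : u ≠ v := ((SimpleGraph.mem_neighborFinset _ _ _).mp hvNu).ne
      have hwu : w ≠ u := huw.ne'
      have hwv : w ≠ v := hvw.ne'
      have hpair : ({s(u, w), s(v, w)} : Finset (Sym2 V)) =
          ({s(a, c), s(b', c)} : Finset (Sym2 V)) := by
        rw [hclassEq (u, v, w) hpT hpb, hclassEq (a, b', c) hp0T hp0b]
      have := pair_analysis huv hwu hwv hab' hca hcb hpair
      simp only [mem_insert, mem_singleton, Prod.mk.injEq]
      tauto
    calc (T.filter (fun p => col s(p.1, p.2.2) = b)).card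
        ≤ ({(a, b', c), (b', a, c)} : Finset (V × V × V)).card := card_le_card hsubset
      _ ≤ 2 := card_insert_le _ _ |>.trans (by simp)
  have himg : T.image (fun p => col s(p.1, p.2.2)) ⊆ C2 G col := by
    intro b hb
    obtain ⟨p, hpT, hpb⟩ := mem_image.mp hb
    obtain ⟨u, v, w⟩ := p
    obtain ⟨hvNu, hwWit⟩ := (hmemT _).mp hpT
    obtain ⟨huw, hvw, hcolw⟩ := mem_wit hwWit
    have huv : u ≠ v := ((SimpleGraph.mem_neighborFinset _ _ _).mp hvNu).ne
    have hwu : w ≠ u := huw.ne'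
    have hne : s(u, w) ≠ s(v, w) := by
      rw [ne_eq, Sym2.eq_iff]
      rintro (⟨h1, _⟩ | ⟨h1, h2⟩)
      · exact huv h1
      · exact hwu h1.symm
    have hsub : ({s(u, w), s(v, w)} : Finset (Sym2 V)) ⊆
        G.edgeFinset.filter (fun e => col e = b) := by
      intro e he
      simp only [mem_insert, mem_singleton] at he
      rcases he with rfl | rfl
      · exact mem_filter.mpr ⟨SimpleGraph.mem_edgeFinset.mpr huw, hpb⟩
      · exact mem_filter.mpr ⟨SimpleGraph.mem_edgeFinset.mpr hvw, by rw [← hcolw]; exact hpb⟩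
    refine mem_filter.mpr ⟨mem_image.mpr ⟨s(u, w), SimpleGraph.mem_edgeFinset.mpr huw, hpb⟩, ?_⟩
    calc 2 = ({s(u, w), s(v, w)} : Finset (Sym2 V)).card := (card_pair hne).symm
      _ ≤ _ := card_le_card hsub
  calc T.card ≤ 2 * (T.image (fun p => col s(p.1, p.2.2))).card :=
        card_le_mul_card_image T 2 hfib
    _ ≤ 2 * (C2 G col).card := Nat.mul_le_mul_left _ (card_le_card himg)


/-- if an edge `uv` has a "bad" (non-cherry) common neighbour then its colour class
has two edges -/
lemma eps_colour_mem
    (hrb : ¬ ∃ x y z : V, G.Adj x y ∧ G.Adj y z ∧ G.Adj x z ∧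
      col s(x, y) ≠ col s(y, z) ∧ col s(y, z) ≠ col s(x, z) ∧ col s(x, y) ≠ col s(x, z))
    {u v : V} (huv : G.Adj u v) (hlt : (Wit G col u v).card < codeg G u v) :
    col s(u, v) ∈ C2 G col := by
  classical
  have hsplit :
      ((G.neighborFinset u ∩ G.neighborFinset v).filter
          (fun w => col s(u, w) = col s(v, w))).card
        + ((G.neighborFinset u ∩ G.neighborFinset v).filter
          (fun w => ¬ col s(u, w) = col s(v, w))).card
        = (G.neighborFinset u ∩ G.neighborFinset v).card :=
    card_filter_add_card_filter_not _
  have hW : (Wit G col u v).card =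
      ((G.neighborFinset u ∩ G.neighborFinset v).filter
        (fun w => col s(u, w) = col s(v, w))).card := rfl
  have hpos : 0 < ((G.neighborFinset u ∩ G.neighborFinset v).filter
      (fun w => ¬ col s(u, w) = col s(v, w))).card := by
    unfold codeg at hlt
    omega
  obtain ⟨w, hw⟩ := card_pos.mp hpos
  simp only [mem_filter, mem_inter, SimpleGraph.mem_neighborFinset] at hw
  obtain ⟨⟨huw, hvw⟩, hnc⟩ := hw
  obtain ⟨f, hfE, hfc, hfne, _⟩ := nonCherry hrb huv huw hvw hnc
  have hsub : ({s(u, v), f} : Finset (Sym2 V)) ⊆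
      G.edgeFinset.filter (fun e => col e = col s(u, v)) := by
    intro e he
    simp only [mem_insert, mem_singleton] at he
    rcases he with rfl | rfl
    · exact mem_filter.mpr ⟨SimpleGraph.mem_edgeFinset.mpr huv, rfl⟩
    · exact mem_filter.mpr ⟨hfE, hfc⟩
  refine mem_filter.mpr ⟨mem_image.mpr ⟨s(u, v), SimpleGraph.mem_edgeFinset.mpr huv, rfl⟩, ?_⟩
  calc 2 = ({s(u, v), f} : Finset (Sym2 V)).card := (card_pair (Ne.symm hfne)).symm
    _ ≤ _ := card_le_card hsub

/-- `Σ_u Σ_{v∈N(u)} ε(u,v) ≤ 4 |C2|`. -/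
lemma sum_eps_le
    (hclass : ∀ i : ℕ, (G.edgeFinset.filter (fun e => col e = i)).card ≤ 2)
    (hrb : ¬ ∃ x y z : V, G.Adj x y ∧ G.Adj y z ∧ G.Adj x z ∧
      col s(x, y) ≠ col s(y, z) ∧ col s(y, z) ≠ col s(x, z) ∧ col s(x, y) ≠ col s(x, z)) :
    ∑ u : V, ∑ v ∈ G.neighborFinset u,
        (if (Wit G col u v).card < codeg G u v then 1 else 0)
      ≤ 4 * (C2 G col).card := by
  classical
  set P : Finset (V × V) :=
    (univ ×ˢ univ).filter
      (fun p => p.2 ∈ G.neighborFinset p.1 ∧ (Wit G col p.1 p.2).card < codeg G p.1 p.2)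
    with hP
  have hmemP : ∀ p : V × V, p ∈ P ↔
      (p.2 ∈ G.neighborFinset p.1 ∧ (Wit G col p.1 p.2).card < codeg G p.1 p.2) := by
    intro p; simp [hP]
  have hcardP : P.card = ∑ u : V, ∑ v ∈ G.neighborFinset u,
      (if (Wit G col u v).card < codeg G u v then 1 else 0) := by
    rw [hP, card_filter, sum_product]
    refine sum_congr rfl fun u _ => ?_
    have : ∀ v : V, (if v ∈ G.neighborFinset u ∧ (Wit G col u v).card < codeg G u v then (1:ℕ) else 0)
        = if v ∈ G.neighborFinset u then (if (Wit G col u v).card < codeg G u v then 1 else 0) else 0 := by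
      intro v
      by_cases hv : v ∈ G.neighborFinset u <;> simp [hv]
    simp only [this]
    rw [Finset.sum_ite_mem, univ_inter]
  rw [← hcardP]
  have hfib : ∀ b ∈ P.image (fun p => col s(p.1, p.2)),
      (P.filter (fun p => col s(p.1, p.2) = b)).card ≤ 4 := by
    intro b hb
    set Q := P.filter (fun p => col s(p.1, p.2) = b) with hQ
    have hQfib : ∀ e ∈ Q.image (fun p => s(p.1, p.2)),
        (Q.filter (fun p => s(p.1, p.2) = e)).card ≤ 2 := by
      intro e he
      obtain ⟨p1, hp1Q, hp1e⟩ := mem_image.mp he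
      obtain ⟨a1, a2⟩ := p1
      have hsub : Q.filter (fun p => s(p.1, p.2) = e) ⊆
          ({(a1, a2), (a2, a1)} : Finset (V × V)) := by
        rintro ⟨x, y⟩ hxy
        obtain ⟨hxyQ, hxye⟩ := mem_filter.mp hxy
        have : s(x, y) = s(a1, a2) := by rw [hxye, ← hp1e]
        rcases Sym2.eq_iff.mp this with ⟨h1, h2⟩ | ⟨h1, h2⟩
        · simp only [mem_insert, mem_singleton, Prod.mk.injEq]
          exact Or.inl ⟨h1, h2⟩
        · simp only [mem_insert, mem_singleton, Prod.mk.injEq]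
          exact Or.inr ⟨h1, h2⟩
      calc (Q.filter (fun p => s(p.1, p.2) = e)).card
          ≤ ({(a1, a2), (a2, a1)} : Finset (V × V)).card := card_le_card hsub
        _ ≤ 2 := card_insert_le _ _ |>.trans (by simp)
    have himgQ : Q.image (fun p => s(p.1, p.2)) ⊆
        G.edgeFinset.filter (fun e => col e = b) := by
      intro e he
      obtain ⟨p, hpQ, hpe⟩ := mem_image.mp he
      obtain ⟨hpP, hpb⟩ := mem_filter.mp hpQ
      obtain ⟨hadj, _⟩ := (hmemP _).mp hpP
      rw [← hpe]
      exact mem_filter.mpr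
        ⟨SimpleGraph.mem_edgeFinset.mpr ((SimpleGraph.mem_neighborFinset _ _ _).mp hadj), hpb⟩
    calc Q.card ≤ 2 * (Q.image (fun p => s(p.1, p.2))).card :=
          card_le_mul_card_image Q 2 hQfib
      _ ≤ 2 * (G.edgeFinset.filter (fun e => col e = b)).card :=
          Nat.mul_le_mul_left _ (card_le_card himgQ)
      _ ≤ 2 * 2 := Nat.mul_le_mul_left _ (hclass b)
      _ = 4 := rfl
  have himg : P.image (fun p => col s(p.1, p.2)) ⊆ C2 G col := by
    intro b hb
    obtain ⟨p, hpP, hpb⟩ := mem_image.mp hb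
    obtain ⟨hadj, hlt⟩ := (hmemP _).mp hpP
    rw [← hpb]
    exact eps_colour_mem hrb ((SimpleGraph.mem_neighborFinset _ _ _).mp hadj) hlt
  calc P.card ≤ 4 * (P.image (fun p => col s(p.1, p.2))).card :=
        card_le_mul_card_image P 4 hfib
    _ ≤ 4 * (C2 G col).card := Nat.mul_le_mul_left _ (card_le_card himg)

lemma two_N2_le : 2 * (C2 G col).card ≤ G.edgeFinset.card := by
  classical
  have h1 : G.edgeFinset.card
      = ∑ c ∈ G.edgeFinset.image col, (G.edgeFinset.filter (fun e => col e = c)).card :=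
    card_eq_sum_card_fiberwise (fun e he => mem_image_of_mem _ he)
  have h2 : ∑ c ∈ C2 G col, (G.edgeFinset.filter (fun e => col e = c)).card
      ≤ ∑ c ∈ G.edgeFinset.image col, (G.edgeFinset.filter (fun e => col e = c)).card :=
    sum_le_sum_of_subset (filter_subset _ _)
  have h3 : (C2 G col).card • 2 ≤ ∑ c ∈ C2 G col, (G.edgeFinset.filter (fun e => col e = c)).card :=
    card_nsmul_le_sum _ _ _ (fun c hc => (mem_filter.mp hc).2)
  rw [smul_eq_mul, mul_comm] at h3
  omega


/-- total codegree sum bounded by colour classes -/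
lemma SC_le
    (hclass : ∀ i : ℕ, (G.edgeFinset.filter (fun e => col e = i)).card ≤ 2)
    (hrb : ¬ ∃ x y z : V, G.Adj x y ∧ G.Adj y z ∧ G.Adj x z ∧
      col s(x, y) ≠ col s(y, z) ∧ col s(y, z) ≠ col s(x, z) ∧ col s(x, y) ≠ col s(x, z)) :
    ∑ u : V, ∑ v ∈ G.neighborFinset u, codeg G u v ≤ 6 * (C2 G col).card := by
  have hpt : ∀ u : V, ∀ v ∈ G.neighborFinset u,
      codeg G u v ≤ (Wit G col u v).card
        + (if (Wit G col u v).card < codeg G u v then 1 else 0) := by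
    intro u v hv
    have h1 := codeg_le_wit hclass hrb ((SimpleGraph.mem_neighborFinset _ _ _).mp hv)
    by_cases h : (Wit G col u v).card < codeg G u v <;> simp [h] <;> omega
  calc ∑ u : V, ∑ v ∈ G.neighborFinset u, codeg G u v
      ≤ ∑ u : V, ∑ v ∈ G.neighborFinset u,
          ((Wit G col u v).card + (if (Wit G col u v).card < codeg G u v then 1 else 0)) :=
        sum_le_sum (fun u _ => sum_le_sum (hpt u))
    _ = (∑ u : V, ∑ v ∈ G.neighborFinset u, (Wit G col u v).card)
        + ∑ u : V, ∑ v ∈ G.neighborFinset u,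
            (if (Wit G col u v).card < codeg G u v then 1 else 0) := by
        rw [← sum_add_distrib]
        exact sum_congr rfl fun u _ => by rw [← sum_add_distrib]
    _ ≤ 2 * (C2 G col).card + 4 * (C2 G col).card :=
        Nat.add_le_add (sum_sum_wit_le hclass) (sum_eps_le hclass hrb)
    _ = 6 * (C2 G col).card := by ring

/-- min-degree `r` forces max-degree `≤ n + 2 - r`. -/
lemma deg_bound
    (hclass : ∀ i : ℕ, (G.edgeFinset.filter (fun e => col e = i)).card ≤ 2)
    (hrb : ¬ ∃ x y z : V, G.Adj x y ∧ G.Adj y z ∧ G.Adj x z ∧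
      col s(x, y) ≠ col s(y, z) ∧ col s(y, z) ≠ col s(x, z) ∧ col s(x, y) ≠ col s(x, z))
    {r : ℕ} (hr : 1 ≤ r) (hδ : ∀ v : V, r ≤ G.degree v) (x : V) :
    G.degree x + r ≤ Fintype.card V + 2 := by
  set n := Fintype.card V with hn
  have hpos : 0 < G.degree x := lt_of_lt_of_le hr (hδ x)
  have key : ∀ v ∈ G.neighborFinset x,
      G.degree x + r ≤ (Wit G col x v).card + (n + 1) := by
    intro v hv
    have h6 := deg_add_deg_le (G := G) x v
    have h1 := codeg_le_wit hclass hrb ((SimpleGraph.mem_neighborFinset _ _ _).mp hv)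
    have h2 := hδ v
    omega
  have hsum := Finset.sum_le_sum key
  rw [sum_const, G.card_neighborFinset_eq_degree, smul_eq_mul, sum_add_distrib,
    sum_const, G.card_neighborFinset_eq_degree, smul_eq_mul] at hsum
  have h2 := sum_wit_le (col := col) hclass x
  have h3 : G.degree x * (G.degree x + r) ≤ G.degree x * (n + 2) := by
    have he : G.degree x + G.degree x * (n + 1) = G.degree x * (n + 2) := by ring
    linarith
  exact Nat.le_of_mul_le_mul_left h3 hpos

lemma helper_sq (d : ℕ) : 7 * d ≤ d * d + 12 := by
  rcases Nat.lt_or_ge d 7 with h | h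
  · interval_cases d <;> norm_num
  · have : 7 * d ≤ d * d := Nat.mul_le_mul_right d h
    omega

/-- the `n = 6` base case -/
lemma base6
    (hclass : ∀ i : ℕ, (G.edgeFinset.filter (fun e => col e = i)).card ≤ 2)
    (hrb : ¬ ∃ x y z : V, G.Adj x y ∧ G.Adj y z ∧ G.Adj x z ∧
      col s(x, y) ≠ col s(y, z) ∧ col s(y, z) ≠ col s(x, z) ∧ col s(x, y) ≠ col s(x, z))
    (hcard : Fintype.card V = 6) :
    G.edgeFinset.card ≤ 10 := by
  by_contra hcon
  push_neg at hcon
  have hdeg : ∑ v : V, G.degree v = 2 * G.edgeFinset.card := G.sum_degrees_eq_twice_card_edges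
  -- Σ d² ≥ 7 Σ d - 12n
  have h1 : 7 * (2 * G.edgeFinset.card) ≤ (∑ v : V, G.degree v * G.degree v) + 72 := by
    calc 7 * (2 * G.edgeFinset.card) = ∑ v : V, 7 * G.degree v := by
          rw [← hdeg, mul_sum]
      _ ≤ ∑ v : V, (G.degree v * G.degree v + 12) := sum_le_sum (fun v _ => helper_sq _)
      _ = (∑ v : V, G.degree v * G.degree v) + 72 := by
          rw [sum_add_distrib, sum_const, card_univ, hcard]
          simp [smul_eq_mul]
  -- 2 S2 ≤ SC + 6 * 2m
  have h2 : 2 * (∑ v : V, G.degree v * G.degree v)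
      ≤ (∑ u : V, ∑ v ∈ G.neighborFinset u, codeg G u v) + 6 * (2 * G.edgeFinset.card) := by
    have hpt : ∀ u : V, ∀ v ∈ G.neighborFinset u,
        G.degree u + G.degree v ≤ codeg G u v + 6 := by
      intro u v _
      have := deg_add_deg_le (G := G) u v
      omega
    have hsum : ∑ u : V, ∑ v ∈ G.neighborFinset u, (G.degree u + G.degree v)
        ≤ ∑ u : V, ∑ v ∈ G.neighborFinset u, (codeg G u v + 6) :=
      sum_le_sum (fun u _ => sum_le_sum (hpt u))
    have hL : ∑ u : V, ∑ v ∈ G.neighborFinset u, (G.degree u + G.degree v)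
        = 2 * (∑ v : V, G.degree v * G.degree v) := by
      have hh : ∀ u : V, ∑ v ∈ G.neighborFinset u, (G.degree u + G.degree v)
          = G.degree u * G.degree u + ∑ v ∈ G.neighborFinset u, G.degree v := by
        intro u
        rw [sum_add_distrib, sum_const, G.card_neighborFinset_eq_degree, smul_eq_mul]
      simp only [hh]
      rw [sum_add_distrib, sum_nbr_eq G (fun v => G.degree v)]
      ring
    have hR : ∑ u : V, ∑ v ∈ G.neighborFinset u, (codeg G u v + 6)
        = (∑ u : V, ∑ v ∈ G.neighborFinset u, codeg G u v) + 6 * (2 * G.edgeFinset.card) := by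
      have hh : ∀ u : V, ∑ v ∈ G.neighborFinset u, (codeg G u v + 6)
          = (∑ v ∈ G.neighborFinset u, codeg G u v) + G.degree u * 6 := by
        intro u
        rw [sum_add_distrib, sum_const, G.card_neighborFinset_eq_degree, smul_eq_mul]
      simp only [hh]
      rw [sum_add_distrib, ← sum_mul, hdeg]
      ring
    rw [hL, hR] at hsum
    exact hsum
  have h3 : (∑ u : V, ∑ v ∈ G.neighborFinset u, codeg G u v) ≤ 6 * (C2 G col).card :=
    SC_le hclass hrb
  have h4 : 2 * (C2 G col).card ≤ G.edgeFinset.card := two_N2_le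
  have k1 : 28 * G.edgeFinset.card ≤ 2 * (∑ v : V, G.degree v * G.degree v) + 144 := by omega
  have k2 : 2 * (∑ v : V, G.degree v * G.degree v)
      ≤ 6 * (C2 G col).card + 12 * G.edgeFinset.card := by omega
  have k3 : 6 * (C2 G col).card ≤ 3 * G.edgeFinset.card := by omega
  have k5 : 20 < 2 * G.edgeFinset.card := by omega
  have k6 : 28 * G.edgeFinset.card ≤ 6 * (C2 G col).card + 12 * G.edgeFinset.card + 144 := by omega
  have k7 : 13 * G.edgeFinset.card ≤ 144 := by omega
  have k8 : G.edgeFinset.card = 11 := by omega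
  omega


/-- The dense branch is impossible: min degree `r = (n+2)/2` together with a vertex of
degree `n + 2 - r` contradicts the colouring hypotheses (for `n ≥ 6`). -/
lemma structure_contra
    (hclass : ∀ i : ℕ, (G.edgeFinset.filter (fun e => col e = i)).card ≤ 2)
    (hrb : ¬ ∃ x y z : V, G.Adj x y ∧ G.Adj y z ∧ G.Adj x z ∧
      col s(x, y) ≠ col s(y, z) ∧ col s(y, z) ≠ col s(x, z) ∧ col s(x, y) ≠ col s(x, z))
    (h6 : 6 ≤ Fintype.card V)
    (hδ : ∀ v : V, (Fintype.card V + 2) / 2 ≤ G.degree v)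
    (u : V) (hu : G.degree u + (Fintype.card V + 2) / 2 = Fintype.card V + 2) :
    False := by
  classical
  set n := Fintype.card V with hn
  set r := (n + 2) / 2 with hr
  have hr4 : 4 ≤ r := by omega
  have hrn : 2 * r ≤ n + 3 := by omega
  set K := G.degree u with hK
  have hKr : K + r = n + 2 := hu
  -- (s1) max degree
  have s1 : ∀ x : V, G.degree x + r ≤ n + 2 := fun x => deg_bound hclass hrb (by omega) hδ x
  -- neighbours of u
  set C := G.neighborFinset u with hC
  have hCcard : C.card = K := G.card_neighborFinset_eq_degree u
  have huC : u ∉ C := G.notMem_neighborFinset_self u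
  -- (s2) every v ∈ C : Wit = 1, codeg = 2, degree = r
  have hwit1 : ∀ v ∈ C, (Wit G col u v).card = 1 := by
    refine all_eq_of_sum_le ?_ ?_
    · intro v hv
      have hadj : G.Adj u v := (SimpleGraph.mem_neighborFinset _ _ _).mp hv
      have h1 := codeg_le_wit hclass hrb (col := col) hadj
      have h2 := deg_add_deg_le (G := G) u v
      have h3 := hδ v
      omega
    · rw [one_mul, hCcard]
      exact sum_wit_le hclass u
  have s2 : ∀ v ∈ C, codeg G u v = 2 ∧ G.degree v = r := by
    intro v hv
    have hadj : G.Adj u v := (SimpleGraph.mem_neighborFinset _ _ _).mp hv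
    have h1 := codeg_le_wit hclass hrb (col := col) hadj
    have h2 := deg_add_deg_le (G := G) u v
    have h3 := hδ v
    have h4 := hwit1 v hv
    have h5 := s1 v
    constructor <;> omega
  -- D = the rest
  set D := (univ : Finset V) \ insert u C with hD
  have hDmem : ∀ x, x ∈ D ↔ (x ≠ u ∧ x ∉ C) := by
    intro x
    simp [hD, mem_sdiff, not_or]
  have hDcard : D.card + (K + 1) = n := by
    have h1 : (insert u C).card = K + 1 := by rw [card_insert_of_notMem huC, hCcard]
    have h2 := card_sdiff_add_card_eq_card (subset_univ (insert u C))
    rw [h1, card_univ] at h2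
    rw [hn]
    exact h2
  have hDr : D.card + 3 = r := by omega
  -- (s4) each v∈C has exactly 2 neighbours in C
  have s4 : ∀ v ∈ C, (G.neighborFinset v ∩ C).card = 2 := by
    intro v hv
    have : G.neighborFinset v ∩ C = G.neighborFinset u ∩ G.neighborFinset v := by
      rw [hC, inter_comm]
    rw [this]
    exact (s2 v hv).1
  -- (s5) each v∈C has exactly r-3 neighbours in D
  have s5 : ∀ v ∈ C, (G.neighborFinset v ∩ D).card + 3 = r := by
    intro v hv
    have hvadj : G.Adj u v := (SimpleGraph.mem_neighborFinset _ _ _).mp hv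
    have huNv : u ∈ G.neighborFinset v := (SimpleGraph.mem_neighborFinset _ _ _).mpr hvadj.symm
    have hpart := Finset.card_inter_add_card_sdiff (G.neighborFinset v) (insert u C)
    have hsd : G.neighborFinset v \ insert u C = G.neighborFinset v ∩ D := by
      ext w
      simp only [mem_sdiff, mem_inter, hDmem, mem_insert, not_or]
      try tauto
    have hins : G.neighborFinset v ∩ insert u C = insert u (G.neighborFinset v ∩ C) := by
      ext w
      simp only [mem_inter, mem_insert]
      constructor
      · rintro ⟨h1, h2 | h2⟩
        · exact Or.inl h2
        · exact Or.inr ⟨h1, h2⟩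
      · rintro (rfl | ⟨h1, h2⟩)
        · exact ⟨huNv, Or.inl rfl⟩
        · exact ⟨h1, Or.inr h2⟩
    have huNvC : u ∉ G.neighborFinset v ∩ C := by
      simp [mem_inter, huC]
    have hinscard : (G.neighborFinset v ∩ insert u C).card = (G.neighborFinset v ∩ C).card + 1 := by
      rw [hins, card_insert_of_notMem huNvC]
    have hdv : (G.neighborFinset v).card = G.degree v := G.card_neighborFinset_eq_degree v
    have h2 := (s2 v hv).2
    have h4 := s4 v hv
    rw [hsd, hinscard, h4, hdv, h2] at hpart
    omega
  -- (s6) double counting C-D edges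
  have s6 : ∑ x ∈ D, (G.neighborFinset x ∩ C).card + 3 * K = r * K := by
    have hcount : ∀ (s t : Finset V), ∑ v ∈ s, (G.neighborFinset v ∩ t).card
        = ∑ x ∈ t, (G.neighborFinset x ∩ s).card := by
      intro s t
      have h1 : ∀ (a : V) (b : Finset V), (G.neighborFinset a ∩ b).card
          = ∑ x ∈ b, if G.Adj a x then 1 else 0 := by
        intro a b
        have he : G.neighborFinset a ∩ b = b.filter (fun x => G.Adj a x) := by
          ext x
          simp [mem_inter, SimpleGraph.mem_neighborFinset, and_comm]
        rw [he, card_filter]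
      simp only [h1]
      rw [Finset.sum_comm]
      refine sum_congr rfl fun x _ => sum_congr rfl fun v _ => ?_
      have : G.Adj v x ↔ G.Adj x v := G.adj_comm v x
      simp [this]
    have h2 : ∑ v ∈ C, (G.neighborFinset v ∩ D).card + 3 * K = r * K := by
      have h3 : ∑ v ∈ C, ((G.neighborFinset v ∩ D).card + 3) = ∑ v ∈ C, r :=
        sum_congr rfl fun v hv => s5 v hv
      rw [sum_add_distrib, sum_const, sum_const, hCcard, smul_eq_mul, smul_eq_mul,
        mul_comm K r] at h3
      omega
    rw [← hcount]
    exact h2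
  -- (s7) all vertices of D have degree K and no D-D edges
  have hdxsplit : ∀ x ∈ D, G.degree x = (G.neighborFinset x ∩ C).card
      + (G.neighborFinset x ∩ D).card := by
    intro x hx
    obtain ⟨hxu, hxC⟩ := (hDmem x).mp hx
    have hxNu : ¬ G.Adj u x := fun h => hxC ((SimpleGraph.mem_neighborFinset _ _ _).mpr h)
    have huNx : u ∉ G.neighborFinset x := by
      rw [SimpleGraph.mem_neighborFinset]
      exact fun h => hxNu h.symm
    have hpart := Finset.card_inter_add_card_sdiff (G.neighborFinset x) (insert u C)
    have hsd : G.neighborFinset x \ insert u C = G.neighborFinset x ∩ D := by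
      ext w
      simp only [mem_sdiff, mem_inter, hDmem, mem_insert, not_or]
      try tauto
    have hins : G.neighborFinset x ∩ insert u C = G.neighborFinset x ∩ C := by
      ext w
      simp only [mem_inter, mem_insert]
      constructor
      · rintro ⟨h1, h2 | h2⟩
        · exact absurd h1 (h2 ▸ huNx)
        · exact ⟨h1, h2⟩
      · rintro ⟨h1, h2⟩
        exact ⟨h1, Or.inr h2⟩
    have hdx : (G.neighborFinset x).card = G.degree x := G.card_neighborFinset_eq_degree x
    rw [hsd, hins, hdx] at hpart
    omega
  have hdegD : ∀ x ∈ D, G.degree x = K ∧ (G.neighborFinset x ∩ D).card = 0 := by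
    have hup : ∀ x ∈ D, G.degree x ≤ K := by
      intro x hx
      have := s1 x
      omega
    have hsplitsum : ∑ x ∈ D, G.degree x
        = ∑ x ∈ D, (G.neighborFinset x ∩ C).card + ∑ x ∈ D, (G.neighborFinset x ∩ D).card := by
      rw [← sum_add_distrib]
      exact sum_congr rfl hdxsplit
    have hub : ∑ x ∈ D, G.degree x ≤ K * D.card := by
      rw [mul_comm]
      have := sum_le_card_nsmul D (fun x => G.degree x) K hup
      simpa [smul_eq_mul] using this
    have hDK : r * K = K * D.card + 3 * K := by
      rw [mul_comm K D.card]
      have : r * K = (D.card + 3) * K := by rw [hDr]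
      rw [this, add_mul]
    have hzero : ∑ x ∈ D, (G.neighborFinset x ∩ D).card = 0 := by omega
    have hsumC : ∑ x ∈ D, (G.neighborFinset x ∩ C).card = K * D.card := by omega
    have hC_each : ∀ x ∈ D, (G.neighborFinset x ∩ C).card = K := by
      refine all_eq_of_le_sum ?_ (le_of_eq hsumC.symm)
      intro x hx
      have h1 := hdxsplit x hx
      have h2 := hup x hx
      omega
    intro x hx
    have h1 := hdxsplit x hx
    have h2 := hC_each x hx
    have h3 : (G.neighborFinset x ∩ D).card = 0 := by
      have := Finset.sum_eq_zero_iff.mp hzero x hx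
      exact this
    constructor <;> omega
  -- (s8) all x in D are joined to exactly C
  have s8 : ∀ x ∈ D, G.neighborFinset x = C := by
    intro x hx
    obtain ⟨hdx, hxD0⟩ := hdegD x hx
    have h1 := hdxsplit x hx
    have hsub1 : G.neighborFinset x ∩ C ⊆ G.neighborFinset x := inter_subset_left
    have hcards : (G.neighborFinset x).card ≤ (G.neighborFinset x ∩ C).card := by
      rw [G.card_neighborFinset_eq_degree x]
      omega
    have heq1 : G.neighborFinset x ∩ C = G.neighborFinset x :=
      eq_of_subset_of_card_le hsub1 hcards
    have hsub2 : G.neighborFinset x ⊆ C := by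
      rw [← heq1]
      exact inter_subset_right
    refine eq_of_subset_of_card_le hsub2 ?_
    rw [hCcard, G.card_neighborFinset_eq_degree x, hdx]
  -- B := insert u D, every member is joined to exactly C
  set B := insert u D with hB
  have hBnbr : ∀ x ∈ B, G.neighborFinset x = C := by
    intro x hx
    rcases mem_insert.mp hx with rfl | hxD
    · rfl
    · exact s8 x hxD
  have huD : u ∉ D := by
    intro h
    exact ((hDmem u).mp h).1 rfl
  have hBcard : B.card + 2 = r := by
    rw [hB, card_insert_of_notMem huD]
    omega
  have hBC : Disjoint B C := by
    rw [hB, disjoint_insert_left]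
    refine ⟨huC, ?_⟩
    rw [disjoint_left]
    intro x hx hxC
    exact ((hDmem x).mp hx).2 hxC
  have hBCuniv : B ∪ C = univ := by
    ext x
    simp only [mem_union, mem_univ, iff_true, hB, mem_insert, hDmem]
    by_cases h1 : x = u
    · tauto
    · by_cases h2 : x ∈ C <;> tauto
  -- every b ∈ B is adjacent to every v ∈ C
  have hBCadj : ∀ x ∈ B, ∀ v ∈ C, G.Adj x v := by
    intro x hx v hv
    rw [← SimpleGraph.mem_neighborFinset, hBnbr x hx]
    exact hv
  -- degree sum: 2m = |B| * K + K * r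
  have hdegsum : 2 * G.edgeFinset.card = B.card * K + K * r := by
    have h1 : ∑ v : V, G.degree v = 2 * G.edgeFinset.card := G.sum_degrees_eq_twice_card_edges
    have h2 : ∑ v : V, G.degree v = ∑ x ∈ B, G.degree x + ∑ v ∈ C, G.degree v := by
      rw [← sum_union hBC, hBCuniv]
    have h3 : ∑ x ∈ B, G.degree x = B.card * K := by
      have he : ∑ x ∈ B, G.degree x = ∑ x ∈ B, K := by
        refine sum_congr rfl fun x hx => ?_
        rw [← G.card_neighborFinset_eq_degree x, hBnbr x hx, hCcard]
      rw [he, sum_const, smul_eq_mul]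
    have h4 : ∑ v ∈ C, G.degree v = K * r := by
      have he : ∑ v ∈ C, G.degree v = ∑ v ∈ C, r :=
        sum_congr rfl fun v hv => (s2 v hv).2
      rw [he, sum_const, hCcard, smul_eq_mul]
    omega
  -- lower bound for SC
  have hSClow : B.card * (2 * K) + K * (4 * B.card)
      ≤ ∑ a : V, ∑ b ∈ G.neighborFinset a, codeg G a b := by
    have hsplit : ∑ a : V, ∑ b ∈ G.neighborFinset a, codeg G a b
        = ∑ x ∈ B, ∑ b ∈ G.neighborFinset x, codeg G x b
          + ∑ v ∈ C, ∑ b ∈ G.neighborFinset v, codeg G v b := by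
      rw [← sum_union hBC, hBCuniv]
    rw [hsplit]
    have hBpart : ∀ x ∈ B, 2 * K ≤ ∑ b ∈ G.neighborFinset x, codeg G x b := by
      intro x hx
      rw [hBnbr x hx]
      have hpt : ∀ v ∈ C, 2 ≤ codeg G x v := by
        intro v hv
        have : G.neighborFinset v ∩ C ⊆ G.neighborFinset x ∩ G.neighborFinset v := by
          intro w hw
          obtain ⟨hw1, hw2⟩ := mem_inter.mp hw
          refine mem_inter.mpr ⟨?_, hw1⟩
          rw [hBnbr x hx]
          exact hw2
        have hle := card_le_card this
        rw [s4 v hv] at hle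
        exact hle
      calc 2 * K = ∑ v ∈ C, 2 := by rw [sum_const, hCcard, smul_eq_mul, mul_comm]
        _ ≤ ∑ v ∈ C, codeg G x v := sum_le_sum hpt
    have hCpart : ∀ v ∈ C, 4 * B.card ≤ ∑ b ∈ G.neighborFinset v, codeg G v b := by
      intro v hv
      have hBsubNv : B ⊆ G.neighborFinset v := by
        intro x hx
        rw [SimpleGraph.mem_neighborFinset]
        exact (hBCadj x hx v hv).symm
      have hsub : (G.neighborFinset v ∩ C) ∪ B ⊆ G.neighborFinset v :=
        union_subset inter_subset_left hBsubNv
      have hdisj2 : Disjoint (G.neighborFinset v ∩ C) B := by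
        exact Disjoint.mono_left inter_subset_right hBC.symm
      have hsum2 : ∑ b ∈ (G.neighborFinset v ∩ C) ∪ B, codeg G v b
          ≤ ∑ b ∈ G.neighborFinset v, codeg G v b :=
        sum_le_sum_of_subset hsub
      rw [sum_union hdisj2] at hsum2
      have hterm1 : ∀ w ∈ G.neighborFinset v ∩ C, B.card ≤ codeg G v w := by
        intro w hw
        obtain ⟨hw1, hw2⟩ := mem_inter.mp hw
        have : B ⊆ G.neighborFinset v ∩ G.neighborFinset w := by
          intro x hx
          refine mem_inter.mpr ⟨hBsubNv hx, ?_⟩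
          rw [SimpleGraph.mem_neighborFinset]
          exact (hBCadj x hx w hw2).symm
        exact card_le_card this
      have hterm2 : ∀ x ∈ B, 2 ≤ codeg G v x := by
        intro x hx
        have : G.neighborFinset v ∩ C ⊆ G.neighborFinset v ∩ G.neighborFinset x := by
          intro w hw
          obtain ⟨hw1, hw2⟩ := mem_inter.mp hw
          refine mem_inter.mpr ⟨hw1, ?_⟩
          rw [hBnbr x hx]
          exact hw2
        have hle := card_le_card this
        rw [s4 v hv] at hle
        exact hle
      have hb1 : 2 * B.card ≤ ∑ w ∈ G.neighborFinset v ∩ C, codeg G v w := by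
        calc 2 * B.card = ∑ w ∈ G.neighborFinset v ∩ C, B.card := by
              rw [sum_const, s4 v hv, smul_eq_mul]
          _ ≤ _ := sum_le_sum hterm1
      have hb2 : 2 * B.card ≤ ∑ x ∈ B, codeg G v x := by
        calc 2 * B.card = ∑ x ∈ B, 2 := by rw [sum_const, smul_eq_mul, mul_comm]
          _ ≤ _ := sum_le_sum hterm2
      omega
    have h1 : B.card * (2 * K) ≤ ∑ x ∈ B, ∑ b ∈ G.neighborFinset x, codeg G x b := by
      rw [mul_comm]
      have := card_nsmul_le_sum B (fun x => ∑ b ∈ G.neighborFinset x, codeg G x b) (2 * K) hBpart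
      simpa [smul_eq_mul, mul_comm] using this
    have h2 : K * (4 * B.card) ≤ ∑ v ∈ C, ∑ b ∈ G.neighborFinset v, codeg G v b := by
      have := card_nsmul_le_sum C (fun v => ∑ b ∈ G.neighborFinset v, codeg G v b) (4 * B.card) hCpart
      rw [hCcard] at this
      simpa [smul_eq_mul, mul_comm] using this
    omega
  -- upper bound and contradiction
  have hup1 := SC_le hclass hrb (G := G) (col := col)
  have hup2 := two_N2_le (G := G) (col := col)
  have hfinal : 2 * (B.card * (2 * K) + K * (4 * B.card)) ≤ 3 * (B.card * K + K * r) := by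
    calc 2 * (B.card * (2 * K) + K * (4 * B.card))
        ≤ 2 * (∑ a : V, ∑ b ∈ G.neighborFinset a, codeg G a b) := by omega
      _ ≤ 2 * (6 * (C2 G col).card) := by omega
      _ = 6 * (2 * (C2 G col).card) := by ring
      _ ≤ 6 * G.edgeFinset.card := by omega
      _ = 3 * (2 * G.edgeFinset.card) := by ring
      _ = 3 * (B.card * K + K * r) := by rw [hdegsum]
  have hKpos : 0 < K := by omega
  have hcancel : K * (12 * B.card) ≤ K * (3 * B.card + 3 * r) := by
    have hL : 2 * (B.card * (2 * K) + K * (4 * B.card)) = K * (12 * B.card) := by ring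
    have hR : 3 * (B.card * K + K * r) = K * (3 * B.card + 3 * r) := by ring
    omega
  have := Nat.le_of_mul_le_mul_left hcancel hKpos
  omega


-- f n = n/2 * ((n+1)/2) + ((n+1)/2)/2
lemma arith1 (n : ℕ) :
    n / 2 * ((n + 1) / 2) + ((n + 1) / 2) / 2 + (n + 1) / 2
      ≤ (n + 1) / 2 * ((n + 2) / 2) + ((n + 2) / 2) / 2 := by
  obtain ⟨q, hq⟩ : ∃ q, n = 4 * q ∨ n = 4 * q + 1 ∨ n = 4 * q + 2 ∨ n = 4 * q + 3 :=
    ⟨n / 4, by omega⟩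
  rcases hq with rfl | rfl | rfl | rfl
  · rw [show (4 * q) / 2 = 2 * q by omega, show (4 * q + 1) / 2 = 2 * q by omega,
      show (2 * q) / 2 = q by omega, show (4 * q + 2) / 2 = 2 * q + 1 by omega,
      show (2 * q + 1) / 2 = q by omega]
    nlinarith []
  · rw [show (4 * q + 1) / 2 = 2 * q by omega, show (4 * q + 1 + 1) / 2 = 2 * q + 1 by omega,
      show (4 * q + 1 + 2) / 2 = 2 * q + 1 by omega, show (2 * q + 1) / 2 = q by omega]
    nlinarith []
  · rw [show (4 * q + 2) / 2 = 2 * q + 1 by omega, show (4 * q + 2 + 1) / 2 = 2 * q + 1 by omega,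
      show (2 * q + 1) / 2 = q by omega, show (4 * q + 2 + 2) / 2 = 2 * q + 2 by omega,
      show (2 * q + 2) / 2 = q + 1 by omega]
    nlinarith []
  · rw [show (4 * q + 3) / 2 = 2 * q + 1 by omega, show (4 * q + 3 + 1) / 2 = 2 * q + 2 by omega,
      show (4 * q + 3 + 2) / 2 = 2 * q + 2 by omega, show (2 * q + 2) / 2 = q + 1 by omega]
    nlinarith []



theorem aux : ∀ n : ℕ, 6 ≤ n → ∀ (W : Type*) [Fintype W] [DecidableEq W]
    (G : SimpleGraph W) [DecidableRel G.Adj] (col : Sym2 W → ℕ),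
    Fintype.card W = n →
    (∀ i : ℕ, (G.edgeFinset.filter (fun e => col e = i)).card ≤ 2) →
    (¬ ∃ x y z : W, G.Adj x y ∧ G.Adj y z ∧ G.Adj x z ∧
      col s(x, y) ≠ col s(y, z) ∧ col s(y, z) ≠ col s(x, z) ∧ col s(x, y) ≠ col s(x, z)) →
    G.edgeFinset.card ≤ n / 2 * ((n + 1) / 2) + ((n + 1) / 2) / 2 := by
  intro n hn6
  induction n, hn6 using Nat.le_induction with
  | base =>
    intro W _ _ G _ col hcard hclass hrb
    rw [show (6:ℕ) / 2 * ((6 + 1) / 2) + ((6 + 1) / 2) / 2 = 10 from by norm_num]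
    exact base6 hclass hrb hcard
  | succ n hn ih =>
    intro W instF instD G instA col hcard hclass hrb
    by_contra hcon
    push_neg at hcon
    rw [show n + 1 + 1 = n + 2 from rfl] at hcon
    by_cases hA : ∃ x : W, G.degree x < (n + 3) / 2
    · -- delete a low-degree vertex
      obtain ⟨x, hx⟩ := hA
      classical
      let s : Set W := {y | y ≠ x}
      haveI : DecidablePred (· ∈ s) := Classical.decPred _
      let G' : SimpleGraph ↥s := G.induce s
      haveI hdec' : DecidableRel G'.Adj := fun a b => Classical.dec _
      let col' : Sym2 ↥s → ℕ := fun e => col (Sym2.map (Subtype.val) e)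
      have hcard' : Fintype.card ↥s = n := by
        have h1 : s.toFinset = Finset.univ.erase x := by
          ext y
          simp [s, Finset.mem_erase]
        have h2 : Fintype.card ↥s = s.toFinset.card := (Set.toFinset_card s).symm
        rw [h2, h1, card_erase_of_mem (mem_univ x), card_univ, hcard]
        omega
      -- edge transfer map
      have hmapmem : ∀ e ∈ G'.edgeFinset, Sym2.map (Subtype.val) e ∈ G.edgeFinset := by
        intro e he
        induction e with
        | _ a b =>
          rw [SimpleGraph.mem_edgeFinset, SimpleGraph.mem_edgeSet] at he
          rw [Sym2.map_pair_eq, SimpleGraph.mem_edgeFinset, SimpleGraph.mem_edgeSet]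
          exact he
      have hinj : Function.Injective (Sym2.map (Subtype.val : ↥s → W)) :=
        Sym2.map.injective Subtype.val_injective
      -- colour classes transfer
      have hclass' : ∀ i : ℕ, (G'.edgeFinset.filter (fun e => col' e = i)).card ≤ 2 := by
        intro i
        have hle : (G'.edgeFinset.filter (fun e => col' e = i)).card
            ≤ (G.edgeFinset.filter (fun e => col e = i)).card := by
          refine card_le_card_of_injOn (Sym2.map (Subtype.val)) ?_ (fun a _ b _ h => hinj h)
          intro e he
          obtain ⟨he1, he2⟩ := mem_filter.mp he
          exact mem_filter.mpr ⟨hmapmem e he1, he2⟩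
        exact le_trans hle (hclass i)
      -- rainbow transfer
      have hrb' : ¬ ∃ x y z : ↥s, G'.Adj x y ∧ G'.Adj y z ∧ G'.Adj x z ∧
          col' s(x, y) ≠ col' s(y, z) ∧ col' s(y, z) ≠ col' s(x, z) ∧
          col' s(x, y) ≠ col' s(x, z) := by
        rintro ⟨a, b, c, h1, h2, h3, h4, h5, h6⟩
        refine hrb ⟨a.val, b.val, c.val, h1, h2, h3, ?_, ?_, ?_⟩ <;>
          simpa [col', Sym2.map_pair_eq] using ‹_›
      have hsub := ih ↥s G' col' hcard' hclass' hrb'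
      -- edge count: m ≤ deg x + m'
      have hcount : G.edgeFinset.card ≤ G.degree x + G'.edgeFinset.card := by
        have hsplit := card_filter_add_card_filter_not
          (s := G.edgeFinset) (p := fun e => x ∈ e)
        have h1 : (G.edgeFinset.filter (fun e => x ∈ e)).card = G.degree x := by
          rw [← SimpleGraph.card_incidenceFinset_eq_degree]
          congr 1
          ext e
          simp [SimpleGraph.mem_incidenceFinset, SimpleGraph.incidenceSet,
            SimpleGraph.mem_edgeFinset, and_comm]
        have h2 : (G.edgeFinset.filter (fun e => ¬ x ∈ e))
            ⊆ G'.edgeFinset.image (Sym2.map (Subtype.val)) := by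
          intro e he
          obtain ⟨heE, hex⟩ := mem_filter.mp he
          induction e with
          | _ a b =>
            have hadj : G.Adj a b := by
              rwa [SimpleGraph.mem_edgeFinset, SimpleGraph.mem_edgeSet] at heE
            have ha : a ≠ x := fun h => hex (h ▸ Sym2.mem_mk_left a b)
            have hb : b ≠ x := fun h => hex (h ▸ Sym2.mem_mk_right a b)
            refine mem_image.mpr ⟨s(⟨a, ha⟩, ⟨b, hb⟩), ?_, by rw [Sym2.map_pair_eq]⟩
            rw [SimpleGraph.mem_edgeFinset, SimpleGraph.mem_edgeSet]
            exact hadj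
        have h3 : (G.edgeFinset.filter (fun e => ¬ x ∈ e)).card ≤ G'.edgeFinset.card :=
          le_trans (card_le_card h2) (card_image_le)
        omega
      have harith := arith1 n
      have hxle : G.degree x ≤ (n + 1) / 2 := by omega
      omega
    · -- high min degree
      push_neg at hA
      have hδ : ∀ v : W, (Fintype.card W + 2) / 2 ≤ G.degree v := by
        intro v
        have := hA v
        rw [hcard]
        omega
      by_cases hB : ∃ u : W, G.degree u + (Fintype.card W + 2) / 2 = Fintype.card W + 2
      · obtain ⟨u, hu⟩ := hB
        exact structure_contra hclass hrb (by omega) hδ u hu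
      · push_neg at hB
        -- all degrees ≤ n+2-r, in fact all equal r, n+1 odd
        have hub : ∀ v : W, G.degree v + (Fintype.card W + 2) / 2 ≤ Fintype.card W + 2 := by
          intro v
          exact deg_bound hclass hrb (by rw [hcard]; omega) hδ v
        have hub' : ∀ v : W, G.degree v + (Fintype.card W + 2) / 2 ≤ Fintype.card W + 1 := by
          intro v
          have h1 := hub v
          have h2 := hB v
          omega
        have ⟨v0⟩ : Nonempty W := by
          rw [← Fintype.card_pos_iff, hcard]
          omega
        -- n+1 must be odd
        have hodd : (n + 1) % 2 = 1 := by
          have h1 := hδ v0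
          have h2 := hub' v0
          rw [hcard] at h1 h2
          omega
        have hreg : ∀ v : W, G.degree v = (n + 3) / 2 := by
          intro v
          have h1 := hδ v
          have h2 := hub' v
          rw [hcard] at h1 h2
          omega
        have hdeg : ∑ v : W, G.degree v = 2 * G.edgeFinset.card :=
          G.sum_degrees_eq_twice_card_edges
        have hsum : 2 * G.edgeFinset.card = (n + 1) * ((n + 3) / 2) := by
          rw [← hdeg]
          rw [show ∑ v : W, G.degree v = ∑ v : W, (n + 3) / 2 from
            sum_congr rfl fun v _ => hreg v]
          rw [sum_const, card_univ, hcard, smul_eq_mul]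
        -- n+1 ≡ 1 or 3 mod 4
        obtain ⟨q, hq⟩ : ∃ q, n + 1 = 4 * q + 1 ∨ n + 1 = 4 * q + 3 := ⟨(n+1)/4, by omega⟩
        rcases hq with hq | hq
        · -- r odd: parity contradiction
          have hr : (n + 3) / 2 = 2 * q + 1 := by omega
          rw [hq, hr] at hsum
          rw [show (4 * q + 1) * (2 * q + 1) = 2 * (4 * (q * q) + 3 * q) + 1 from by ring] at hsum
          omega
        · -- n+1 = 4q+3 : m = f(n+1) exactly
          have hr : (n + 3) / 2 = 2 * q + 2 := by omega
          rw [hq, hr] at hsum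
          -- f(n+1) = (2q+1)(2q+2) + (q+1)
          have hf : (n + 1) / 2 * ((n + 2) / 2) + ((n + 2) / 2) / 2
              = (2 * q + 1) * (2 * q + 2) + (q + 1) := by
            rw [show (n + 1) / 2 = 2 * q + 1 by omega,
              show (n + 2) / 2 = 2 * q + 2 by omega,
              show (2 * q + 2) / 2 = q + 1 by omega]
          rw [hf] at hcon
          have hkey : (4 * q + 3) * (2 * q + 2) = 2 * ((2 * q + 1) * (2 * q + 2) + (q + 1)) := by
            ring
          -- 2m = (4q+3)(2q+2) = 2 f, but m ≥ f + 1
          linarith [hsum, hkey, hcon]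

end Stmt7Aux

/-- For `n ≥ 6`, every edge-coloured graph on `n` vertices with all colour
classes of size at most 2 and no rainbow triangle has at most
`⌊n/2⌋⌈n/2⌉ + ⌊⌈n/2⌉/2⌋` edges. -/
theorem stmt7 {V : Type*} [Fintype V] [DecidableEq V] (G : SimpleGraph V)
    [DecidableRel G.Adj] (n : ℕ) (hn : n = Fintype.card V) (hn6 : 6 ≤ n)
    (col : Sym2 V → ℕ)
    (hclass : ∀ i : ℕ, (G.edgeFinset.filter (fun e => col e = i)).card ≤ 2)
    (hrb : ¬ ∃ x y z : V, G.Adj x y ∧ G.Adj y z ∧ G.Adj x z ∧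
      col s(x, y) ≠ col s(y, z) ∧ col s(y, z) ≠ col s(x, z) ∧ col s(x, y) ≠ col s(x, z)) :
    G.edgeFinset.card ≤ (n / 2) * ((n + 1) / 2) + ((n + 1) / 2) / 2 := by
  exact Stmt7Aux.aux n hn6 V G col hn.symm hclass hrb
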